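/- (Counting of green nodes at depth d.) Let l ≥ 2, let m, n ≥ 2l − 3, set N = m + n − l, and let 0 ≤ d ≤ l − 1. Then the number of Brauer representation triples γ for the pair (m, n−d) with ht(γ) ≤ N which possess at least one N-excluded ancestor (at some depth d' > d) equals Z_univ(l − d − 1). -/
import Mathlib


/-- A Brauer representation triple for the pair `(m, n)`: a natural number
`k ≤ min m n`, a partition `γ₊` of `m - k` and a partition `γ₋` of `n - k`. -/
structure BRT (m n : ℕ) where
  k : ℕ
  k_le : k ≤ min m n
  gp : Nat.Partition (m - k)
  gm : Nat.Partition (n - k)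

namespace BRT

/-- The height of a Brauer representation triple: the total number of parts of the
two partitions (the sum of the first-column lengths of the Young diagrams). -/
def ht {m n : ℕ} (γ : BRT m n) : ℕ :=
  Multiset.card γ.gp.parts + Multiset.card γ.gm.parts

end BRT

/-- `AddBox lam mu` : the multiset of parts `mu` is obtained from the multiset of parts
`lam` by adding one box to the Young diagram (either as a new part equal to `1`, or by
increasing one existing part by `1`). -/
def AddBox (lam mu : Multiset ℕ) : Prop :=
  mu = 1 ::ₘ lam ∨ ∃ a ∈ lam, mu = (a + 1) ::ₘ lam.erase a

/-- `γ'` (a triple at depth `d+1`) is a parent of `γ` (a triple at depth `d`):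
either (a) `k' = k`, `γ₊' = γ₊` and `γ₋` is obtained from `γ₋'` by adding one box, or
(b) `k' = k - 1`, `γ₋' = γ₋` and `γ₊'` is obtained from `γ₊` by adding one box. -/
def IsParent {m n₁ n₂ : ℕ} (γ : BRT m n₁) (γ' : BRT m n₂) : Prop :=
  (γ'.k = γ.k ∧ γ'.gp.parts = γ.gp.parts ∧ AddBox γ'.gm.parts γ.gm.parts)
  ∨ (γ'.k = γ.k - 1 ∧ γ'.gm.parts = γ.gm.parts ∧ AddBox γ.gp.parts γ'.gp.parts)

/-- `IsAncestor m n d d' γ γ'` : the triple `γ'` at depth `d'` for the pair `(m,n)` is an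
ancestor of the triple `γ` at depth `d`, i.e. `γ'` is reachable from `γ` by iterating
the parent relation `d' - d` times (one step for each unit increase of depth). -/
inductive IsAncestor (m n : ℕ) : ∀ (d d' : ℕ), BRT m (n - d) → BRT m (n - d') → Prop
  | step {d : ℕ} (γ : BRT m (n - d)) (γ' : BRT m (n - (d + 1))) :
      IsParent γ γ' → IsAncestor m n d (d + 1) γ γ'
  | tail {d d' : ℕ} {γ : BRT m (n - d)} {γ' : BRT m (n - d')} (γ'' : BRT m (n - (d' + 1))) :
      IsAncestor m n d d' γ γ' → IsParent γ' γ'' → IsAncestor m n d (d' + 1) γ γ''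

/-- `Zuniv s` : the number of quadruples `(Δ, k, λ₁, λ₂)` with `Δ ≥ 1`, `k ≥ 0` natural
numbers and `λ₁, λ₂` partitions (of arbitrary natural numbers) such that
`Δ + 2k + |λ₁| + |λ₂| = s`. -/
noncomputable def Zuniv (s : ℕ) : ℕ :=
  Nat.card {q : (ℕ × ℕ) × (Σ a : ℕ, Nat.Partition a) × (Σ a : ℕ, Nat.Partition a) //
    1 ≤ q.1.1 ∧ q.1.1 + 2 * q.1.2 + q.2.1.1 + q.2.2.1 = s}

/-- `p a` : the number of partitions of `a` (with `p 0 = 1`). -/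
def p (a : ℕ) : ℕ := Fintype.card (Nat.Partition a)

open Multiset

section AuxMultiset

lemma multiset_card_le_sum {s : Multiset ℕ} (h : ∀ a ∈ s, 0 < a) :
    Multiset.card s ≤ s.sum := by
  induction s using Multiset.induction with
  | empty => simp
  | cons a s ih =>
    simp only [Multiset.card_cons, Multiset.sum_cons]
    have h1 := h a (mem_cons_self a s)
    have h2 := ih (fun b hb => h b (mem_cons_of_mem hb))
    omega

def strip (s : Multiset ℕ) : Multiset ℕ := (s.map (· - 1)).filter (· ≠ 0)

lemma strip_pos {s : Multiset ℕ} : ∀ {i}, i ∈ strip s → 0 < i := by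
  intro i hi
  rw [strip, Multiset.mem_filter] at hi
  exact Nat.pos_of_ne_zero hi.2

lemma strip_cons (a : ℕ) (s : Multiset ℕ) :
    strip (a ::ₘ s) = if a - 1 = 0 then strip s else (a - 1) ::ₘ strip s := by
  by_cases h : a - 1 = 0 <;>
    simp [strip, Multiset.map_cons, Multiset.filter_cons, h]

lemma strip_sum_card {s : Multiset ℕ} (h : ∀ a ∈ s, 0 < a) :
    (strip s).sum + Multiset.card s = s.sum := by
  induction s using Multiset.induction with
  | empty => simp [strip]
  | cons a s ih =>
    have h1 := h a (mem_cons_self a s)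
    have h2 := ih (fun b hb => h b (mem_cons_of_mem hb))
    rw [strip_cons]
    split_ifs with hc
    · simp only [Multiset.card_cons, Multiset.sum_cons]; omega
    · simp only [Multiset.card_cons, Multiset.sum_cons]; omega

def unstrip (c : ℕ) (s : Multiset ℕ) : Multiset ℕ :=
  s.map (· + 1) + Multiset.replicate (c - Multiset.card s) 1

lemma unstrip_pos {c : ℕ} {s : Multiset ℕ} : ∀ {i}, i ∈ unstrip c s → 0 < i := by
  intro i hi
  rw [unstrip, Multiset.mem_add] at hi
  rcases hi with hi | hi
  · obtain ⟨a, -, rfl⟩ := Multiset.mem_map.1 hi; omega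
  · rw [Multiset.eq_of_mem_replicate hi]; omega

lemma sum_map_add_one (s : Multiset ℕ) : (s.map (· + 1)).sum = s.sum + Multiset.card s := by
  induction s using Multiset.induction with
  | empty => simp
  | cons a s ih => simp only [Multiset.map_cons, Multiset.sum_cons, Multiset.card_cons, ih]; omega

lemma unstrip_sum {c : ℕ} {s : Multiset ℕ} (h : Multiset.card s ≤ c) :
    (unstrip c s).sum = s.sum + c := by
  rw [unstrip, Multiset.sum_add, sum_map_add_one, Multiset.sum_replicate, smul_eq_mul]
  omega

lemma unstrip_card {c : ℕ} {s : Multiset ℕ} (h : Multiset.card s ≤ c) :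
    Multiset.card (unstrip c s) = c := by
  rw [unstrip, Multiset.card_add, Multiset.card_map, Multiset.card_replicate]
  omega

lemma strip_unstrip {c : ℕ} (s : Multiset ℕ) (h : ∀ a ∈ s, 0 < a) :
    strip (unstrip c s) = s := by
  rw [unstrip, strip, Multiset.map_add, Multiset.map_map, Multiset.map_replicate,
    Multiset.filter_add]
  have h1 : Multiset.map ((· - 1) ∘ (· + 1)) s = s := by
    rw [show ((· - 1) ∘ (· + 1) : ℕ → ℕ) = id from funext fun x => by simp]
    exact Multiset.map_id s
  rw [h1]
  have h2 : Multiset.filter (· ≠ 0) s = s :=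
    Multiset.filter_eq_self.2 fun a ha => (Nat.pos_iff_ne_zero.mp (h a ha))
  have h3 : Multiset.filter (· ≠ 0) (Multiset.replicate (c - Multiset.card s) (1 - 1 : ℕ)) = 0 := by
    rw [Multiset.filter_eq_nil]
    intro a ha
    rw [Multiset.eq_of_mem_replicate ha]
    simp
  rw [h2, h3, add_zero]

lemma unstrip_strip (s : Multiset ℕ) (h : ∀ a ∈ s, 0 < a) :
    unstrip (Multiset.card s) (strip s) = s := by
  rw [unstrip, strip]
  rw [Multiset.filter_map]
  have h1 : Multiset.filter ((· ≠ 0) ∘ (· - 1)) s = Multiset.filter (· ≠ 1) s := by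
    apply Multiset.filter_congr
    intro a ha
    have := h a ha
    simp only [Function.comp_apply]
    omega
  rw [h1, Multiset.map_map]
  have h2 : Multiset.map ((· + 1) ∘ (· - 1)) (Multiset.filter (· ≠ 1) s) =
      Multiset.filter (· ≠ 1) s := by
    have heq := Multiset.map_congr (f := (· + 1) ∘ (· - 1)) (g := id)
      (rfl : Multiset.filter (· ≠ 1) s = Multiset.filter (· ≠ 1) s)
      (fun a ha => by
        have ha' := h a (Multiset.mem_of_mem_filter ha)
        simp only [Function.comp_apply, id_eq]
        omega)
    rw [heq, Multiset.map_id]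
  rw [h2, Multiset.card_map]
  have h4 : Multiset.replicate
      (Multiset.card s - Multiset.card (Multiset.filter (· ≠ 1) s)) 1 =
      Multiset.filter (fun a => ¬ a ≠ 1) s := by
    symm
    apply Multiset.eq_replicate.2
    constructor
    · have hfil := Multiset.filter_add_not (· ≠ 1) s
      have hc := congrArg Multiset.card hfil
      rw [Multiset.card_add] at hc
      omega
    · intro b hb
      have := Multiset.of_mem_filter hb
      simpa using this
  rw [h4, Multiset.filter_add_not]

end AuxMultiset

section AuxBRT

lemma AddBox.sum_eq {lam mu : Multiset ℕ} (h : AddBox lam mu) : mu.sum = lam.sum + 1 := by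
  rcases h with rfl | ⟨a, ha, rfl⟩
  · rw [Multiset.sum_cons]; omega
  · rw [Multiset.sum_cons]
    have h2 : a ::ₘ lam.erase a = lam := Multiset.cons_erase ha
    have h3 : (a ::ₘ lam.erase a).sum = lam.sum := by rw [h2]
    rw [Multiset.sum_cons] at h3
    omega

lemma AddBox.card_bound {lam mu : Multiset ℕ} (h : AddBox lam mu) :
    Multiset.card lam ≤ Multiset.card mu ∧ Multiset.card mu ≤ Multiset.card lam + 1 := by
  rcases h with rfl | ⟨a, ha, rfl⟩
  · simp
  · have h1 : 0 < Multiset.card lam := Multiset.card_pos.2 (fun he => by simp [he] at ha)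
    rw [Multiset.card_cons, Multiset.card_erase_of_mem ha, Nat.pred_eq_sub_one]
    omega

lemma BRT.k_le_left {m n : ℕ} (γ : BRT m n) : γ.k ≤ m :=
  le_trans γ.k_le (min_le_left _ _)

lemma BRT.k_le_right {m n : ℕ} (γ : BRT m n) : γ.k ≤ n :=
  le_trans γ.k_le (min_le_right _ _)

lemma BRT.card_gp_le {m n : ℕ} (γ : BRT m n) :
    Multiset.card γ.gp.parts + γ.k ≤ m := by
  have h1 := multiset_card_le_sum (s := γ.gp.parts) (fun a ha => γ.gp.parts_pos ha)
  rw [γ.gp.parts_sum] at h1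
  have := γ.k_le_left
  omega

lemma BRT.card_gm_le {m n : ℕ} (γ : BRT m n) :
    Multiset.card γ.gm.parts + γ.k ≤ n := by
  have h1 := multiset_card_le_sum (s := γ.gm.parts) (fun a ha => γ.gm.parts_pos ha)
  rw [γ.gm.parts_sum] at h1
  have := γ.k_le_right
  omega

lemma BRT.ext' {m n : ℕ} {γ γ' : BRT m n} (hk : γ.k = γ'.k)
    (hp : γ.gp.parts = γ'.gp.parts) (hq : γ.gm.parts = γ'.gm.parts) : γ = γ' := by
  obtain ⟨k, kle, gp, gm⟩ := γ
  obtain ⟨k', kle', gp', gm'⟩ := γ'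
  dsimp only at hk hp hq
  subst hk
  have h1 : gp = gp' := Nat.Partition.ext hp
  have h2 : gm = gm' := Nat.Partition.ext hq
  subst h1; subst h2
  rfl

lemma IsParent.bound {m n₁ n₂ : ℕ} {γ : BRT m n₁} {γ' : BRT m n₂} (h : IsParent γ γ') :
    γ'.ht + γ'.k ≤ γ.ht + γ.k := by
  rcases h with ⟨hk, hp, hb⟩ | ⟨hk, hq, hb⟩
  · have hc := hb.card_bound
    have hpc : Multiset.card γ'.gp.parts = Multiset.card γ.gp.parts := by rw [hp]
    unfold BRT.ht
    omega
  · have hs := hb.sum_eq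
    rw [γ.gp.parts_sum, γ'.gp.parts_sum] at hs
    have h1 := γ.k_le_left
    have h2 := γ'.k_le_left
    have hc := hb.card_bound
    have hqc : Multiset.card γ'.gm.parts = Multiset.card γ.gm.parts := by rw [hq]
    unfold BRT.ht
    omega

lemma IsAncestor.bound {m n d d' : ℕ} {γ : BRT m (n - d)} {γ' : BRT m (n - d')}
    (h : IsAncestor m n d d' γ γ') : γ'.ht + γ'.k ≤ γ.ht + γ.k := by
  induction h with
  | step _ _ hp => exact hp.bound
  | tail _ _ hp ih => exact le_trans hp.bound ih

lemma exists_parent {m n e : ℕ} (γ : BRT m (n - e)) (hk : 1 ≤ γ.k) :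
    ∃ γ' : BRT m (n - (e + 1)), IsParent γ γ' ∧ γ'.k = γ.k - 1 ∧
      γ'.gp.parts = 1 ::ₘ γ.gp.parts ∧ γ'.gm.parts = γ.gm.parts := by
  have h1 : γ.k ≤ m := γ.k_le_left
  have h2 : γ.k ≤ n - e := γ.k_le_right
  refine ⟨⟨γ.k - 1, Nat.le_min.mpr ⟨by omega, by omega⟩,
    ⟨1 ::ₘ γ.gp.parts, ?_, ?_⟩, ⟨γ.gm.parts, fun hi => γ.gm.parts_pos hi, ?_⟩⟩,
    Or.inr ⟨rfl, rfl, Or.inl rfl⟩, rfl, rfl, rfl⟩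
  · intro i hi
    rw [Multiset.mem_cons] at hi
    rcases hi with rfl | hi
    · exact one_pos
    · exact γ.gp.parts_pos hi
  · rw [Multiset.sum_cons, γ.gp.parts_sum]
    omega
  · rw [γ.gm.parts_sum]
    omega

lemma exists_ancestor {m n d : ℕ} (γ : BRT m (n - d)) :
    ∀ j, 1 ≤ j → j ≤ γ.k →
    ∃ γ' : BRT m (n - (d + j)), IsAncestor m n d (d + j) γ γ' ∧
      γ'.k = γ.k - j ∧ γ'.ht = γ.ht + j := by
  intro j
  induction j with
  | zero => omega
  | succ j ih =>
    intro _ hj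
    rcases Nat.eq_zero_or_pos j with rfl | hj1
    · obtain ⟨γ', hp, hk', hgp, hgm⟩ := exists_parent (e := d) γ (by omega)
      refine ⟨γ', IsAncestor.step γ γ' hp, hk', ?_⟩
      unfold BRT.ht
      rw [hgp, hgm, Multiset.card_cons]
      omega
    · obtain ⟨γ', ha, hk', hht⟩ := ih hj1 (by omega)
      obtain ⟨γ'', hp, hk'', hgp, hgm⟩ := exists_parent (e := d + j) γ' (by omega)
      refine ⟨γ'', IsAncestor.tail γ'' ha hp, by omega, ?_⟩
      unfold BRT.ht at hht ⊢
      rw [hgp, hgm, Multiset.card_cons]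
      omega

lemma green_iff {m n l d : ℕ} (γ : BRT m (n - d)) :
    (γ.ht ≤ m + n - l ∧ ∃ d' : ℕ, ∃ γ' : BRT m (n - d'),
        IsAncestor m n d d' γ γ' ∧ m + n - l < γ'.ht) ↔
    (γ.ht ≤ m + n - l ∧ 1 ≤ γ.k ∧ m + n - l < γ.ht + γ.k) := by
  constructor
  · rintro ⟨h1, d', γ', ha, h2⟩
    have hb := ha.bound
    exact ⟨h1, by omega, by omega⟩
  · rintro ⟨h1, hk, h2⟩
    obtain ⟨γ', ha, hk', hht⟩ := exists_ancestor γ γ.k hk le_rfl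
    exact ⟨h1, d + γ.k, γ', ha, by omega⟩

end AuxBRT



section GreenEquiv

lemma unstrip_strip' (s : Multiset ℕ) (h : ∀ a ∈ s, 0 < a) {c : ℕ}
    (hc : c = Multiset.card s) : unstrip c (strip s) = s := by
  subst hc
  exact unstrip_strip s h

lemma sigma_partition_eq {a b : ℕ} {p : Nat.Partition a} {q : Nat.Partition b}
    (h : a = b) (h2 : p.parts = q.parts) :
    (⟨a, p⟩ : Σ c : ℕ, Nat.Partition c) = ⟨b, q⟩ := by
  subst h
  rw [Nat.Partition.ext h2]

def fwd (m n l d : ℕ) (γ : BRT m (n - d)) :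
    (ℕ × ℕ) × (Σ a : ℕ, Nat.Partition a) × (Σ a : ℕ, Nat.Partition a) :=
  ((d + 2 * γ.k + (m - γ.k - Multiset.card γ.gp.parts)
        + (n - d - γ.k - Multiset.card γ.gm.parts) + 1 - l,
    l - (d + γ.k + (m - γ.k - Multiset.card γ.gp.parts)
        + (n - d - γ.k - Multiset.card γ.gm.parts) + 1)),
   (⟨m - γ.k - Multiset.card γ.gp.parts,
     ⟨strip γ.gp.parts, strip_pos, by
       have h1 := strip_sum_card (s := γ.gp.parts) (fun a ha => γ.gp.parts_pos ha)
       rw [γ.gp.parts_sum] at h1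
       have h2 := γ.card_gp_le
       omega⟩⟩,
    ⟨n - d - γ.k - Multiset.card γ.gm.parts,
     ⟨strip γ.gm.parts, strip_pos, by
       have h1 := strip_sum_card (s := γ.gm.parts) (fun a ha => γ.gm.parts_pos ha)
       rw [γ.gm.parts_sum] at h1
       have h2 := γ.card_gm_le
       omega⟩⟩))

lemma fwd_11 (m n l d : ℕ) (γ : BRT m (n - d)) :
    (fwd m n l d γ).1.1 = d + 2 * γ.k + (m - γ.k - Multiset.card γ.gp.parts)
        + (n - d - γ.k - Multiset.card γ.gm.parts) + 1 - l := rfl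

lemma fwd_12 (m n l d : ℕ) (γ : BRT m (n - d)) :
    (fwd m n l d γ).1.2 = l - (d + γ.k + (m - γ.k - Multiset.card γ.gp.parts)
        + (n - d - γ.k - Multiset.card γ.gm.parts) + 1) := rfl

lemma fwd_211 (m n l d : ℕ) (γ : BRT m (n - d)) :
    (fwd m n l d γ).2.1.1 = m - γ.k - Multiset.card γ.gp.parts := rfl

lemma fwd_212 (m n l d : ℕ) (γ : BRT m (n - d)) :
    (fwd m n l d γ).2.1.2.parts = strip γ.gp.parts := rfl

lemma fwd_221 (m n l d : ℕ) (γ : BRT m (n - d)) :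
    (fwd m n l d γ).2.2.1 = n - d - γ.k - Multiset.card γ.gm.parts := rfl

lemma fwd_222 (m n l d : ℕ) (γ : BRT m (n - d)) :
    (fwd m n l d γ).2.2.2.parts = strip γ.gm.parts := rfl

lemma fwd_mem (m n l d : ℕ) (hl : 2 ≤ l) (hm : 2 * l - 3 ≤ m) (hn : 2 * l - 3 ≤ n)
    (hd : d ≤ l - 1) (γ : BRT m (n - d))
    (h : γ.ht ≤ m + n - l ∧ 1 ≤ γ.k ∧ m + n - l < γ.ht + γ.k) :
    1 ≤ (fwd m n l d γ).1.1 ∧ (fwd m n l d γ).1.1 + 2 * (fwd m n l d γ).1.2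
      + (fwd m n l d γ).2.1.1 + (fwd m n l d γ).2.2.1 = l - d - 1 := by
  obtain ⟨h1, h2, h3⟩ := h
  have hht : γ.ht = Multiset.card γ.gp.parts + Multiset.card γ.gm.parts := rfl
  rw [hht] at h1 h3
  have hcp := γ.card_gp_le
  have hcm := γ.card_gm_le
  have hk1 := γ.k_le_left
  have hk2 := γ.k_le_right
  rw [fwd_11, fwd_12, fwd_211, fwd_221]
  exact ⟨by omega, by omega⟩

def bwd (m n l d : ℕ) (hl : 2 ≤ l) (hm : 2 * l - 3 ≤ m) (hn : 2 * l - 3 ≤ n)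
    (hd : d ≤ l - 1) (D j a b : ℕ) (μ₁ : Nat.Partition a) (μ₂ : Nat.Partition b)
    (h1 : 1 ≤ D) (h2 : D + 2 * j + a + b = l - d - 1) : BRT m (n - d) where
  k := D + j
  k_le := by
    have hc1 : Multiset.card μ₁.parts ≤ a := by
      have := multiset_card_le_sum (s := μ₁.parts) (fun x hx => μ₁.parts_pos hx)
      rw [μ₁.parts_sum] at this
      exact this
    exact Nat.le_min.mpr ⟨by omega, by omega⟩
  gp := ⟨unstrip (m - (D + j) - a) μ₁.parts, unstrip_pos, by
    have hc1 : Multiset.card μ₁.parts ≤ a := by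
      have := multiset_card_le_sum (s := μ₁.parts) (fun x hx => μ₁.parts_pos hx)
      rw [μ₁.parts_sum] at this
      exact this
    rw [unstrip_sum (by omega), μ₁.parts_sum]
    omega⟩
  gm := ⟨unstrip (n - d - (D + j) - b) μ₂.parts, unstrip_pos, by
    have hc2 : Multiset.card μ₂.parts ≤ b := by
      have := multiset_card_le_sum (s := μ₂.parts) (fun x hx => μ₂.parts_pos hx)
      rw [μ₂.parts_sum] at this
      exact this
    rw [unstrip_sum (by omega), μ₂.parts_sum]
    omega⟩

lemma card_parts_le {a : ℕ} (μ : Nat.Partition a) : Multiset.card μ.parts ≤ a := by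
  have := multiset_card_le_sum (s := μ.parts) (fun x hx => μ.parts_pos hx)
  rw [μ.parts_sum] at this
  exact this

lemma bwd_k (m n l d : ℕ) (hl : 2 ≤ l) (hm : 2 * l - 3 ≤ m) (hn : 2 * l - 3 ≤ n)
    (hd : d ≤ l - 1) (D j a b : ℕ) (μ₁ : Nat.Partition a) (μ₂ : Nat.Partition b)
    (h1 : 1 ≤ D) (h2 : D + 2 * j + a + b = l - d - 1) :
    (bwd m n l d hl hm hn hd D j a b μ₁ μ₂ h1 h2).k = D + j := rfl

lemma bwd_gp (m n l d : ℕ) (hl : 2 ≤ l) (hm : 2 * l - 3 ≤ m) (hn : 2 * l - 3 ≤ n)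
    (hd : d ≤ l - 1) (D j a b : ℕ) (μ₁ : Nat.Partition a) (μ₂ : Nat.Partition b)
    (h1 : 1 ≤ D) (h2 : D + 2 * j + a + b = l - d - 1) :
    (bwd m n l d hl hm hn hd D j a b μ₁ μ₂ h1 h2).gp.parts
      = unstrip (m - (D + j) - a) μ₁.parts := rfl

lemma bwd_gm (m n l d : ℕ) (hl : 2 ≤ l) (hm : 2 * l - 3 ≤ m) (hn : 2 * l - 3 ≤ n)
    (hd : d ≤ l - 1) (D j a b : ℕ) (μ₁ : Nat.Partition a) (μ₂ : Nat.Partition b)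
    (h1 : 1 ≤ D) (h2 : D + 2 * j + a + b = l - d - 1) :
    (bwd m n l d hl hm hn hd D j a b μ₁ μ₂ h1 h2).gm.parts
      = unstrip (n - d - (D + j) - b) μ₂.parts := rfl

lemma bwd_mem (m n l d : ℕ) (hl : 2 ≤ l) (hm : 2 * l - 3 ≤ m) (hn : 2 * l - 3 ≤ n)
    (hd : d ≤ l - 1) (D j a b : ℕ) (μ₁ : Nat.Partition a) (μ₂ : Nat.Partition b)
    (h1 : 1 ≤ D) (h2 : D + 2 * j + a + b = l - d - 1) :
    (bwd m n l d hl hm hn hd D j a b μ₁ μ₂ h1 h2).ht ≤ m + n - l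
    ∧ 1 ≤ (bwd m n l d hl hm hn hd D j a b μ₁ μ₂ h1 h2).k
    ∧ m + n - l < (bwd m n l d hl hm hn hd D j a b μ₁ μ₂ h1 h2).ht
        + (bwd m n l d hl hm hn hd D j a b μ₁ μ₂ h1 h2).k := by
  have hc1 := card_parts_le μ₁
  have hc2 := card_parts_le μ₂
  have e1 : Multiset.card (unstrip (m - (D + j) - a) μ₁.parts) = m - (D + j) - a :=
    unstrip_card (by omega)
  have e2 : Multiset.card (unstrip (n - d - (D + j) - b) μ₂.parts)
      = n - d - (D + j) - b := unstrip_card (by omega)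
  have hht : (bwd m n l d hl hm hn hd D j a b μ₁ μ₂ h1 h2).ht
      = Multiset.card (unstrip (m - (D + j) - a) μ₁.parts)
        + Multiset.card (unstrip (n - d - (D + j) - b) μ₂.parts) := rfl
  rw [hht, bwd_k, e1, e2]
  refine ⟨by omega, by omega, by omega⟩

lemma fwd_bwd (m n l d : ℕ) (hl : 2 ≤ l) (hm : 2 * l - 3 ≤ m) (hn : 2 * l - 3 ≤ n)
    (hd : d ≤ l - 1) (D j a b : ℕ) (μ₁ : Nat.Partition a) (μ₂ : Nat.Partition b)
    (h1 : 1 ≤ D) (h2 : D + 2 * j + a + b = l - d - 1) :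
    fwd m n l d (bwd m n l d hl hm hn hd D j a b μ₁ μ₂ h1 h2)
      = ((D, j), (⟨a, μ₁⟩, ⟨b, μ₂⟩)) := by
  have hc1 := card_parts_le μ₁
  have hc2 := card_parts_le μ₂
  have e1 : Multiset.card (unstrip (m - (D + j) - a) μ₁.parts) = m - (D + j) - a :=
    unstrip_card (by omega)
  have e2 : Multiset.card (unstrip (n - d - (D + j) - b) μ₂.parts)
      = n - d - (D + j) - b := unstrip_card (by omega)
  unfold fwd
  simp only [Prod.mk.injEq]
  refine ⟨⟨?_, ?_⟩, ?_, ?_⟩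
  · rw [bwd_gp, bwd_gm, bwd_k, e1, e2]
    omega
  · rw [bwd_gp, bwd_gm, bwd_k, e1, e2]
    omega
  · exact sigma_partition_eq (by rw [bwd_gp, bwd_k, e1]; omega)
      (by dsimp only; rw [bwd_gp]; exact strip_unstrip _ (fun y hy => μ₁.parts_pos hy))
  · exact sigma_partition_eq (by rw [bwd_gm, bwd_k, e2]; omega)
      (by dsimp only; rw [bwd_gm]; exact strip_unstrip _ (fun y hy => μ₂.parts_pos hy))

def greenEquiv (m n l d : ℕ) (hl : 2 ≤ l) (hm : 2 * l - 3 ≤ m) (hn : 2 * l - 3 ≤ n)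
    (hd : d ≤ l - 1) :
    {γ : BRT m (n - d) // γ.ht ≤ m + n - l ∧ 1 ≤ γ.k ∧ m + n - l < γ.ht + γ.k} ≃
    {q : (ℕ × ℕ) × (Σ a : ℕ, Nat.Partition a) × (Σ a : ℕ, Nat.Partition a) //
      1 ≤ q.1.1 ∧ q.1.1 + 2 * q.1.2 + q.2.1.1 + q.2.2.1 = l - d - 1} where
  toFun := fun x => ⟨fwd m n l d x.1, fwd_mem m n l d hl hm hn hd x.1 x.2⟩
  invFun := fun q =>
    ⟨bwd m n l d hl hm hn hd q.1.1.1 q.1.1.2 q.1.2.1.1 q.1.2.2.1 q.1.2.1.2 q.1.2.2.2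
        q.2.1 q.2.2,
     bwd_mem m n l d hl hm hn hd _ _ _ _ _ _ _ _⟩
  left_inv := fun x => by
    apply Subtype.ext
    dsimp only
    obtain ⟨h1, h2, h3⟩ := x.2
    have hht : x.1.ht = Multiset.card x.1.gp.parts + Multiset.card x.1.gm.parts := rfl
    rw [hht] at h1 h3
    have hcp := x.1.card_gp_le
    have hcm := x.1.card_gm_le
    have hk1 := x.1.k_le_left
    have hk2 := x.1.k_le_right
    refine BRT.ext' ?_ ?_ ?_
    · rw [bwd_k, fwd_11, fwd_12]
      omega
    · rw [bwd_gp, fwd_212, fwd_11, fwd_12, fwd_211]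
      exact unstrip_strip' _ (fun y hy => x.1.gp.parts_pos hy) (by omega)
    · rw [bwd_gm, fwd_222, fwd_11, fwd_12, fwd_221]
      exact unstrip_strip' _ (fun y hy => x.1.gm.parts_pos hy) (by omega)
  right_inv := fun x => by
    obtain ⟨⟨⟨D, j⟩, ⟨a, μ₁⟩, ⟨b, μ₂⟩⟩, hq⟩ := x
    apply Subtype.ext
    dsimp only
    exact fwd_bwd m n l d hl hm hn hd D j a b μ₁ μ₂ hq.1 hq.2

end GreenEquiv

/-- Counting of green nodes at depth `d`: for `l ≥ 2`, `m, n ≥ 2l - 3`, `N = m + n - l`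
and `0 ≤ d ≤ l - 1`, the number of Brauer representation triples `γ` for the pair
`(m, n - d)` with `ht(γ) ≤ N` which possess at least one `N`-excluded ancestor (at some
depth `d' > d`) equals `Z_univ(l - d - 1)`. -/
theorem stmt15 (m n l d : ℕ) (hl : 2 ≤ l) (hm : 2 * l - 3 ≤ m) (hn : 2 * l - 3 ≤ n)
    (hd : d ≤ l - 1) :
    Nat.card {γ : BRT m (n - d) //
        γ.ht ≤ m + n - l ∧
        ∃ d' : ℕ, ∃ γ' : BRT m (n - d'),
          IsAncestor m n d d' γ γ' ∧ m + n - l < γ'.ht}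
      = Zuniv (l - d - 1) := by
  unfold Zuniv
  exact Nat.card_congr
    ((Equiv.subtypeEquivRight (fun γ => green_iff (m := m) (n := n) (l := l) (d := d) γ)).trans
      (greenEquiv m n l d hl hm hn hd))
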